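/- Let I be a finite index set and for each y ∈ I let (Y_k^y)_{k≥1} be independent families of i.i.d. uniform draws from a four-element set, with a fixed symbol e_y for each y, and let n_y(m) count occurrences of e_y among the first m draws of the family y. For any family of ℕ-valued random variables (Φ_y)_{y∈I} that is independent of all the (Y_k^y), E[ ∏_{y∈I} |{m ∈ ℕ : n_y(m) = Φ_y}| ] ≤ 4^{|I|}. -/

import Mathlib

open MeasureTheory ProbabilityTheory ENNReal

namespace Stmt4Aux

/-- running count of symbol `e0` among the first `m` values of `x` -/
def cnt (e0 : Fin 4) (m : ℕ) (x : ℕ → Fin 4) : ℕ :=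
  ((Finset.range m).filter (fun k => x k = e0)).card

lemma measurable_cnt (e0 : Fin 4) (m : ℕ) : Measurable (cnt e0 m) := by
  have h : cnt e0 m = fun x => ∑ k ∈ Finset.range m, if x k = e0 then 1 else 0 := by
    funext x; exact Finset.card_filter _ _
  rw [h]
  refine Finset.measurable_sum _ fun k _ => ?_
  have hs : MeasurableSet {x : ℕ → Fin 4 | x k = e0} := by
    have := measurable_pi_apply (a := k) (X := fun _ : ℕ => Fin 4) (measurableSet_singleton e0)
    simpa [Set.preimage, Set.mem_singleton_iff] using this
  exact Measurable.ite hs measurable_const measurable_const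

/-- the number of times the running count equals `ℓ`, as an `ℝ≥0∞`-valued function -/
noncomputable def Hfun (e0 : Fin 4) (ℓ : ℕ) (x : ℕ → Fin 4) : ℝ≥0∞ :=
  ∑' m, if cnt e0 m x = ℓ then 1 else 0

lemma measurable_Hfun (e0 : Fin 4) (ℓ : ℕ) : Measurable (Hfun e0 ℓ) :=
  Measurable.ennreal_tsum fun m =>
    Measurable.ite ((measurable_cnt e0 m) (measurableSet_singleton ℓ))
      measurable_const measurable_const

lemma cnt_mono (e0 : Fin 4) (x : ℕ → Fin 4) {m m' : ℕ} (h : m ≤ m') :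
    cnt e0 m x ≤ cnt e0 m' x :=
  Finset.card_le_card (Finset.filter_subset_filter _ (Finset.range_subset_range.2 h))

lemma cnt_succ (e0 : Fin 4) (x : ℕ → Fin 4) (m : ℕ) (h : x m = e0) :
    cnt e0 (m + 1) x = cnt e0 m x + 1 := by
  classical
  unfold cnt
  rw [Finset.range_add_one, Finset.filter_insert, if_pos h,
    Finset.card_insert_of_notMem (by simp)]

lemma single_bound {Ω : Type*} [MeasureSpace Ω] [IsProbabilityMeasure (ℙ : Measure Ω)]
    (Z : ℕ → Ω → Fin 4) (e0 : Fin 4) (hm : ∀ k, Measurable (Z k))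
    (hkey : ∀ m ℓ', ℙ ((fun ω => cnt e0 m (fun k => Z k ω)) ⁻¹' {ℓ'} ∩ (Z m) ⁻¹' {e0})
      = ℙ ((fun ω => cnt e0 m (fun k => Z k ω)) ⁻¹' {ℓ'}) * (1 / 4)) (ℓ : ℕ) :
    ∫⁻ ω, Hfun e0 ℓ (fun k => Z k ω) ∂ℙ ≤ 4 := by
  classical
  have hZv : Measurable (fun ω (k : ℕ) => Z k ω) := measurable_pi_lambda _ hm
  set A : ℕ → Set Ω := fun m => (fun ω => cnt e0 m (fun k => Z k ω)) ⁻¹' {ℓ} with hA_def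
  have hA : ∀ m, MeasurableSet (A m) := fun m =>
    ((measurable_cnt e0 m).comp hZv) (measurableSet_singleton ℓ)
  set C : ℕ → Set Ω := fun m => A m ∩ (Z m) ⁻¹' {e0} with hC_def
  have hC : ∀ m, MeasurableSet (C m) := fun m =>
    (hA m).inter ((hm m) (measurableSet_singleton e0))
  -- disjointness of the C m
  have hdisj : Pairwise (Function.onFun Disjoint C) := by
    have key : ∀ i j : ℕ, i < j → ∀ ω, ω ∈ C i → ω ∉ C j := by
      intro i j hij ω hωi hωj
      have h1 : cnt e0 i (fun k => Z k ω) = ℓ := hωi.1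
      have h2 : Z i ω = e0 := hωi.2
      have h3 : cnt e0 j (fun k => Z k ω) = ℓ := hωj.1
      have h4 : cnt e0 (i + 1) (fun k => Z k ω) = ℓ + 1 := by
        rw [cnt_succ e0 _ i h2, h1]
      have h5 : ℓ + 1 ≤ ℓ := by
        rw [← h4, ← h3]; exact cnt_mono e0 _ hij
      omega
    intro i j hij
    rcases hij.lt_or_gt with h | h
    · exact Set.disjoint_left.2 fun ω hωi hωj => key i j h ω hωi hωj
    · exact Set.disjoint_left.2 fun ω hωi hωj => key j i h ω hωj hωi
  -- the lintegral as a sum of measures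
  have hint : ∫⁻ ω, Hfun e0 ℓ (fun k => Z k ω) ∂ℙ = ∑' m, ℙ (A m) := by
    have h1 : ∫⁻ ω, Hfun e0 ℓ (fun k => Z k ω) ∂ℙ
        = ∫⁻ ω, ∑' m, (if cnt e0 m (fun k => Z k ω) = ℓ then (1 : ℝ≥0∞) else 0) ∂ℙ := rfl
    rw [h1, lintegral_tsum (f := fun m ω => if cnt e0 m (fun k => Z k ω) = ℓ then (1 : ℝ≥0∞) else 0) (fun m => (Measurable.ite
      (((measurable_cnt e0 m).comp hZv) (measurableSet_singleton ℓ))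
      measurable_const measurable_const).aemeasurable)]
    refine tsum_congr fun m => ?_
    rw [← lintegral_indicator_one (hA m)]
    refine lintegral_congr fun ω => ?_
    by_cases h : cnt e0 m (fun k => Z k ω) = ℓ
    · simp [Set.indicator_apply, A, h]
    · simp [Set.indicator_apply, A, h]
  -- each ℙ (A m) = 4 * ℙ (C m)
  have h4 : ∀ m, ℙ (A m) = 4 * ℙ (C m) := by
    intro m
    have := hkey m ℓ
    rw [hC_def]
    simp only [A]
    rw [this]
    rw [mul_comm (4 : ℝ≥0∞), mul_assoc]
    have h14 : (1 / 4 : ℝ≥0∞) * 4 = 1 := by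
      rw [one_div, ENNReal.inv_mul_cancel (by norm_num) (by norm_num)]
    rw [h14, mul_one]
  rw [hint]
  calc ∑' m, ℙ (A m) = ∑' m, 4 * ℙ (C m) := tsum_congr h4
    _ = 4 * ∑' m, ℙ (C m) := ENNReal.tsum_mul_left
    _ = 4 * ℙ (⋃ m, C m) := by rw [measure_iUnion hdisj hC]
    _ ≤ 4 * 1 := mul_le_mul_right prob_le_one _
    _ = 4 := mul_one _

end Stmt4Aux


open Stmt4Aux

/-- Single-cycle entropy bound: for independent families of i.i.d. uniform draws from a
four-element set indexed by a finite set `I`, and random levels `Φ_y` independent of all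
the draws, the expected product over `y ∈ I` of the number of times `m` at which the
running count of a fixed symbol `e y` equals `Φ y` is at most `4^|I|`. -/
theorem stmt4 {Ω : Type*} [MeasureSpace Ω] [IsProbabilityMeasure (ℙ : Measure Ω)]
    {I : Type*} [Fintype I]
    (Y : I → ℕ → Ω → Fin 4) (e : I → Fin 4)
    (hmeas : ∀ y k, Measurable (Y y k))
    (hunif : ∀ y k (v : Fin 4), ℙ {ω | Y y k ω = v} = 1 / 4)
    (hindep : iIndepFun (fun p : I × ℕ => Y p.1 p.2) ℙ)
    (Φ : I → Ω → ℕ) (hΦmeas : ∀ y, Measurable (Φ y))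
    (hΦindep : IndepFun (fun ω (y : I) => Φ y ω) (fun ω (p : I × ℕ) => Y p.1 p.2 ω) ℙ) :
    ∫⁻ ω, (∏ y : I, ∑' m : ℕ,
        if ((Finset.range m).filter (fun k => Y y k ω = e y)).card = Φ y ω
        then (1 : ℝ≥0∞) else 0) ∂ℙ
      ≤ 4 ^ Fintype.card I := by
  classical
  have hYv : Measurable (fun ω (p : I × ℕ) => Y p.1 p.2 ω) :=
    measurable_pi_lambda _ fun p => hmeas p.1 p.2
  have hΦv : Measurable (fun ω (y : I) => Φ y ω) := measurable_pi_lambda _ hΦmeas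
  -- single-family bound
  have hsingle : ∀ (y : I) (ℓ : ℕ),
      ∫⁻ ω, Hfun (e y) ℓ (fun k => Y y k ω) ∂ℙ ≤ 4 := by
    intro y ℓ
    refine single_bound (fun k => Y y k) (e y) (fun k => hmeas y k) ?_ ℓ
    intro m ℓ'
    set S : Finset (I × ℕ) := ({y} : Finset I) ×ˢ Finset.range m with hS
    set T : Finset (I × ℕ) := ({(y, m)} : Finset (I × ℕ)) with hT
    have hdisj : Disjoint S T := by
      rw [Finset.disjoint_right]
      intro p hp hpS
      rw [hT, Finset.mem_singleton] at hp
      rw [hS, Finset.mem_product] at hpS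
      rw [hp] at hpS
      simpa using hpS.2
    have hIF := iIndepFun.indepFun_finset S T hdisj hindep (fun p => hmeas p.1 p.2)
    have hyT : ((y, m) : I × ℕ) ∈ T := by rw [hT]; exact Finset.mem_singleton_self _
    have hMF : Measurable (fun t : (↥S → Fin 4) =>
        (Finset.univ.filter (fun i : ↥S => t i = e y)).card) := measurable_of_countable _
    have hMG : Measurable (fun t : (↥T → Fin 4) => t ⟨(y, m), hyT⟩) := measurable_of_countable _
    have hcomp := hIF.comp hMF hMG
    have hFc : ((fun t : (↥S → Fin 4) => (Finset.univ.filter (fun i : ↥S => t i = e y)).card)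
          ∘ fun ω (i : ↥S) => Y (i : I × ℕ).1 (i : I × ℕ).2 ω)
        = fun ω => cnt (e y) m (fun k => Y y k ω) := by
      funext ω
      show (Finset.univ.filter (fun i : ↥S => Y (i : I × ℕ).1 (i : I × ℕ).2 ω = e y)).card
        = ((Finset.range m).filter (fun k => Y y k ω = e y)).card
      refine Finset.card_bij (fun i _ => (i : I × ℕ).2) ?_ ?_ ?_
      · intro i hi
        have hiS := Finset.mem_product.1 i.2
        have hiy : (i : I × ℕ).1 = y := Finset.mem_singleton.1 hiS.1
        rw [Finset.mem_filter] at hi ⊢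
        refine ⟨hiS.2, ?_⟩
        have h2 := hi.2
        rw [hiy] at h2
        exact h2
      · intro i hi j hj hij
        have hiS := Finset.mem_product.1 i.2; have hjS := Finset.mem_product.1 j.2
        exact Subtype.ext (Prod.ext
          ((Finset.mem_singleton.1 hiS.1).trans (Finset.mem_singleton.1 hjS.1).symm) hij)
      · intro k hk
        rw [Finset.mem_filter, Finset.mem_range] at hk
        refine ⟨⟨(y, k), ?_⟩, ?_, rfl⟩
        · rw [hS, Finset.mem_product]
          exact ⟨Finset.mem_singleton_self _, Finset.mem_range.2 hk.1⟩
        · rw [Finset.mem_filter]; exact ⟨Finset.mem_univ _, hk.2⟩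
    have hGc : ((fun t : (↥T → Fin 4) => t ⟨(y, m), hyT⟩)
          ∘ fun ω (i : ↥T) => Y (i : I × ℕ).1 (i : I × ℕ).2 ω) = Y y m := rfl
    rw [hFc, hGc] at hcomp
    have hmul := hcomp.measure_inter_preimage_eq_mul {ℓ'} {e y}
      (measurableSet_singleton _) (measurableSet_singleton _)
    show ℙ ((fun ω => cnt (e y) m (fun k => Y y k ω)) ⁻¹' {ℓ'} ∩ (Y y m) ⁻¹' {e y})
      = ℙ ((fun ω => cnt (e y) m (fun k => Y y k ω)) ⁻¹' {ℓ'}) * (1 / 4)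
    rw [hmul]
    congr 1
    exact hunif y m (e y)
  -- measurability of the per-index functions
  have hGm : ∀ (y : I) (ℓ : ℕ), Measurable (fun ω => Hfun (e y) ℓ (fun k => Y y k ω)) :=
    fun y ℓ => (measurable_Hfun (e y) ℓ).comp
      (measurable_pi_lambda (fun ω (k : ℕ) => Y y k ω) (fun k => hmeas y k))
  -- product over a finset bound
  have hgroup : ∀ (ℓv : I → ℕ) (s : Finset I),
      ∫⁻ ω, ∏ y ∈ s, Hfun (e y) (ℓv y) (fun k => Y y k ω) ∂ℙ ≤ 4 ^ s.card := by
    intro ℓv s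
    induction s using Finset.induction_on with
    | empty => simp
    | @insert a s ha ih =>
      set mm : I × ℕ → MeasurableSpace Ω :=
        fun p => MeasurableSpace.comap (Y p.1 p.2) inferInstance with hmm
      have h_le : ∀ p : I × ℕ, mm p ≤ (inferInstance : MeasurableSpace Ω) :=
        fun p => (hmeas p.1 p.2).comap_le
      have hii : iIndep mm ℙ := (iIndepFun_iff_iIndep _ _ _).mp hindep
      have hZM : ∀ (A : Set I) (y : I), y ∈ A →
          Measurable[⨆ p ∈ Prod.fst ⁻¹' A, mm p] (fun ω (k : ℕ) => Y y k ω) := by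
        intro A y hy
        letI : MeasurableSpace Ω := ⨆ p ∈ Prod.fst ⁻¹' A, mm p
        refine measurable_pi_lambda _ fun k => ?_
        exact Measurable.of_comap_le
          (le_biSup mm (show ((y, k) : I × ℕ) ∈ Prod.fst ⁻¹' A from hy))
      have hdisjST : Disjoint ((Prod.fst : I × ℕ → I) ⁻¹' ({a} : Set I))
          ((Prod.fst : I × ℕ → I) ⁻¹' (↑s : Set I)) := by
        rw [Set.disjoint_left]
        rintro p hp hps
        rw [Set.mem_preimage, Set.mem_singleton_iff] at hp
        rw [Set.mem_preimage, hp] at hps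
        exact ha (by exact_mod_cast hps)
      have hbig := indep_iSup_of_disjoint h_le hii hdisjST
      have hma : Measurable[⨆ p ∈ Prod.fst ⁻¹' ({a} : Set I), mm p]
          (fun ω => Hfun (e a) (ℓv a) (fun k => Y a k ω)) :=
        (measurable_Hfun _ _).comp (hZM _ a rfl)
      have hms : Measurable[⨆ p ∈ Prod.fst ⁻¹' (↑s : Set I), mm p]
          (fun ω => ∏ y ∈ s, Hfun (e y) (ℓv y) (fun k => Y y k ω)) := by
        letI : MeasurableSpace Ω := ⨆ p ∈ Prod.fst ⁻¹' (↑s : Set I), mm p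
        exact Finset.measurable_prod s fun y hy =>
          (measurable_Hfun _ _).comp (hZM _ y hy)
      have hInd : IndepFun (fun ω => Hfun (e a) (ℓv a) (fun k => Y a k ω))
          (fun ω => ∏ y ∈ s, Hfun (e y) (ℓv y) (fun k => Y y k ω)) ℙ := by
        rw [IndepFun_iff_Indep]
        exact indep_of_indep_of_le_right
          (indep_of_indep_of_le_left hbig hma.comap_le) hms.comap_le
      have hprod : ∀ ω, (∏ y ∈ insert a s, Hfun (e y) (ℓv y) (fun k => Y y k ω))
          = (Hfun (e a) (ℓv a) (fun k => Y a k ω))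
            * ∏ y ∈ s, Hfun (e y) (ℓv y) (fun k => Y y k ω) :=
        fun ω => Finset.prod_insert ha
      calc ∫⁻ ω, ∏ y ∈ insert a s, Hfun (e y) (ℓv y) (fun k => Y y k ω) ∂ℙ
          = (∫⁻ ω, Hfun (e a) (ℓv a) (fun k => Y a k ω) ∂ℙ)
            * ∫⁻ ω, ∏ y ∈ s, Hfun (e y) (ℓv y) (fun k => Y y k ω) ∂ℙ := by
            rw [lintegral_congr hprod]
            exact lintegral_mul_eq_lintegral_mul_lintegral_of_indepFun''
              (hGm a (ℓv a)).aemeasurable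
              (Finset.measurable_prod s fun y _ => hGm y (ℓv y)).aemeasurable hInd
        _ ≤ 4 * 4 ^ s.card := mul_le_mul' (hsingle a (ℓv a)) ih
        _ = 4 ^ (insert a s).card := by
            rw [Finset.card_insert_of_notMem ha, pow_succ, mul_comm]
  -- measurability of the two factors
  have hWm : ∀ φ : I → ℕ,
      Measurable (fun ω => if φ = (fun y : I => Φ y ω) then (1 : ℝ≥0∞) else 0) :=
    fun φ => (measurable_of_countable
      (fun v : I → ℕ => if φ = v then (1 : ℝ≥0∞) else 0)).comp hΦv
  have hPm : ∀ φ : I → ℕ,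
      Measurable (fun ω => ∏ y : I, Hfun (e y) (φ y) (fun k => Y y k ω)) :=
    fun φ => Finset.measurable_prod _ fun y _ => hGm y (φ y)
  -- pointwise decomposition
  have hpt : ∀ ω, (∏ y : I, ∑' m : ℕ,
        if ((Finset.range m).filter (fun k => Y y k ω = e y)).card = Φ y ω
        then (1 : ℝ≥0∞) else 0)
      = ∑' φ : I → ℕ, (if φ = (fun y : I => Φ y ω) then (1 : ℝ≥0∞) else 0)
          * ∏ y : I, Hfun (e y) (φ y) (fun k => Y y k ω) := by
    intro ω
    rw [tsum_eq_single (fun y => Φ y ω) (fun φ hφ => by rw [if_neg hφ, zero_mul])]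
    rw [if_pos rfl, one_mul]
    rfl
  -- the weights sum to one
  have hsum1 : ∑' φ : I → ℕ,
      ∫⁻ ω, (if φ = (fun y : I => Φ y ω) then (1 : ℝ≥0∞) else 0) ∂ℙ = 1 := by
    rw [← lintegral_tsum (fun φ => (hWm φ).aemeasurable)]
    have h1 : ∀ ω, (∑' φ : I → ℕ,
        if φ = (fun y : I => Φ y ω) then (1 : ℝ≥0∞) else 0) = 1 :=
      fun ω => tsum_ite_eq (fun y : I => Φ y ω) (fun _ => (1 : ℝ≥0∞))
    rw [lintegral_congr h1, lintegral_one, measure_univ]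
  -- the splitting of each term
  have key : ∀ φ : I → ℕ,
      ∫⁻ ω, (if φ = (fun y : I => Φ y ω) then (1 : ℝ≥0∞) else 0)
        * ∏ y : I, Hfun (e y) (φ y) (fun k => Y y k ω) ∂ℙ
      = (∫⁻ ω, (if φ = (fun y : I => Φ y ω) then (1 : ℝ≥0∞) else 0) ∂ℙ)
        * ∫⁻ ω, ∏ y : I, Hfun (e y) (φ y) (fun k => Y y k ω) ∂ℙ := by
    intro φ
    have hf : Measurable (fun v : I → ℕ => if φ = v then (1 : ℝ≥0∞) else 0) :=
      measurable_of_countable _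
    have hg : Measurable (fun x : I × ℕ → Fin 4 =>
        ∏ y : I, Hfun (e y) (φ y) (fun k => x (y, k))) :=
      Finset.measurable_prod _ fun y _ => (measurable_Hfun _ _).comp
        (measurable_pi_lambda _ fun k => measurable_pi_apply (y, k))
    have hIndWP : IndepFun
        (fun ω => if φ = (fun y : I => Φ y ω) then (1 : ℝ≥0∞) else 0)
        (fun ω => ∏ y : I, Hfun (e y) (φ y) (fun k => Y y k ω)) ℙ :=
      hΦindep.comp hf hg
    exact lintegral_mul_eq_lintegral_mul_lintegral_of_indepFun''
      (hWm φ).aemeasurable (hPm φ).aemeasurable hIndWP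
  calc ∫⁻ ω, (∏ y : I, ∑' m : ℕ,
        if ((Finset.range m).filter (fun k => Y y k ω = e y)).card = Φ y ω
        then (1 : ℝ≥0∞) else 0) ∂ℙ
      = ∑' φ : I → ℕ, ∫⁻ ω, (if φ = (fun y : I => Φ y ω) then (1 : ℝ≥0∞) else 0)
          * ∏ y : I, Hfun (e y) (φ y) (fun k => Y y k ω) ∂ℙ := by
        rw [lintegral_congr hpt]
        exact lintegral_tsum (fun φ => ((hWm φ).mul (hPm φ)).aemeasurable)
    _ = ∑' φ : I → ℕ, (∫⁻ ω, (if φ = (fun y : I => Φ y ω) then (1 : ℝ≥0∞) else 0) ∂ℙ)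
          * ∫⁻ ω, ∏ y : I, Hfun (e y) (φ y) (fun k => Y y k ω) ∂ℙ := tsum_congr key
    _ ≤ ∑' φ : I → ℕ, (∫⁻ ω, (if φ = (fun y : I => Φ y ω) then (1 : ℝ≥0∞) else 0) ∂ℙ)
          * 4 ^ Fintype.card I := by
        refine ENNReal.tsum_le_tsum fun φ => mul_le_mul_right ?_ _
        have := hgroup φ Finset.univ
        simpa [Finset.card_univ] using this
    _ = (∑' φ : I → ℕ, ∫⁻ ω, (if φ = (fun y : I => Φ y ω) then (1 : ℝ≥0∞) else 0) ∂ℙ)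
          * 4 ^ Fintype.card I := ENNReal.tsum_mul_right
    _ = 4 ^ Fintype.card I := by rw [hsum1, one_mul]
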